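/- arXiv:1610.00561 — 5 statements merged into one kernel-verified Lean document; each statement's English description precedes it below -/
import Mathlib

section
/- (Closedness of the Weierstrass forms.) Let U : Ω → ℂ on an open set Ω ⊆ ℂ, let ψ = (ψ₁,ψ₂) solve Dψ = 0 and φ = (φ₁,φ₂) solve D^∨φ = 0, with all functions differentiable. Define x¹_z = (i/2)(conj φ₂ · conj ψ₂ + φ₁ψ₁), x²_z = (1/2)(conj φ₂ · conj ψ₂ − φ₁ψ₁), x³_z = (1/2)(conj φ₂ · ψ₁ + φ₁ · conj ψ₂), x⁴_z = (i/2)(conj φ₂ · ψ₁ − φ₁ · conj ψ₂). Then for each k = 1, 2, 3, 4 the function ∂̄(x^k_z) is real-valued; equivalently, each 1-form x^k_z dz + conj(x^k_z) dz̄ is closed, so the Weierstrass integrals are locally well defined. -/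
open Complex Matrix Finset

noncomputable section

/-- Wirtinger derivative `∂f = ½(f_x − i f_y)`. -/
def wdz (f : ℂ → ℂ) (z : ℂ) : ℂ :=
  (1 / 2) * (fderiv ℝ f z 1 - Complex.I * fderiv ℝ f z Complex.I)

/-- Conjugate Wirtinger derivative `∂̄f = ½(f_x + i f_y)`. -/
def wdzb (f : ℂ → ℂ) (z : ℂ) : ℂ :=
  (1 / 2) * (fderiv ℝ f z 1 + Complex.I * fderiv ℝ f z Complex.I)

/-- The Dirac equation `Dψ = 0` with potential `U` on `Ω`:
`∂ψ₂ + Uψ₁ = 0` and `−∂̄ψ₁ + Ūψ₂ = 0`. -/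
def DiracEq (U ψ₁ ψ₂ : ℂ → ℂ) (Ω : Set ℂ) : Prop :=
  ∀ z ∈ Ω, wdz ψ₂ z + U z * ψ₁ z = 0 ∧
    -wdzb ψ₁ z + (starRingEnd ℂ) (U z) * ψ₂ z = 0

def Gam : Matrix (Fin 2) (Fin 2) ℂ := !![0, 1; -1, 0]

def sig3 : Matrix (Fin 2) (Fin 2) ℂ := !![1, 0; 0, -1]

/-- The quaternionic matrix associated to a spinor. -/
def spinMat (ψ₁ ψ₂ : ℂ → ℂ) (z : ℂ) : Matrix (Fin 2) (Fin 2) ℂ :=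
  !![ψ₁ z, -(starRingEnd ℂ) (ψ₂ z); ψ₂ z, (starRingEnd ℂ) (ψ₁ z)]

def wdzM (F : ℂ → Matrix (Fin 2) (Fin 2) ℂ) (z : ℂ) : Matrix (Fin 2) (Fin 2) ℂ :=
  Matrix.of fun i j => wdz (fun w => F w i j) z

def wdzbM (F : ℂ → Matrix (Fin 2) (Fin 2) ℂ) (z : ℂ) : Matrix (Fin 2) (Fin 2) ℂ :=
  Matrix.of fun i j => wdzb (fun w => F w i j) z

/-- `S` is a primitive of `Γω(Φ,Ψ)` on `Ω`. -/
def IsPrimitive (Φ Ψ S : ℂ → Matrix (Fin 2) (Fin 2) ℂ) (Ω : Set ℂ) : Prop :=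
  ∀ z ∈ Ω,
    wdzM S z = (-(Complex.I / 2)) • (Gam * (Φ z)ᵀ * (sig3 + 1) * Ψ z) ∧
    wdzbM S z = (-(Complex.I / 2)) • (Gam * (Φ z)ᵀ * (sig3 - 1) * Ψ z)

def MatDiffOn (F : ℂ → Matrix (Fin 2) (Fin 2) ℂ) (Ω : Set ℂ) : Prop :=
  ∀ z ∈ Ω, ∀ i j, DifferentiableAt ℝ (fun w => F w i j) z

/-- A matrix solution of the Dirac equation: both columns solve `Dψ = 0`. -/
def MatDiracEq (U : ℂ → ℂ) (Ψ : ℂ → Matrix (Fin 2) (Fin 2) ℂ) (Ω : Set ℂ) : Prop :=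
  ∀ j : Fin 2, DiracEq U (fun z => Ψ z 0 j) (fun z => Ψ z 1 j) Ω

/-- The Weierstrass derivatives `x^k_z` of the Weierstrass representation. -/
def weierXz (ψ₁ ψ₂ φ₁ φ₂ : ℂ) : Fin 4 → ℂ :=
  ![(Complex.I / 2) * ((starRingEnd ℂ) φ₂ * (starRingEnd ℂ) ψ₂ + φ₁ * ψ₁),
    (1 / 2) * ((starRingEnd ℂ) φ₂ * (starRingEnd ℂ) ψ₂ - φ₁ * ψ₁),
    (1 / 2) * ((starRingEnd ℂ) φ₂ * ψ₁ + φ₁ * (starRingEnd ℂ) ψ₂),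
    (Complex.I / 2) * ((starRingEnd ℂ) φ₂ * ψ₁ - φ₁ * (starRingEnd ℂ) ψ₂)]

/-- Identification of `ℝ⁴` with `u(2)`. -/
def toU2 (x : Fin 4 → ℝ) : Matrix (Fin 2) (Fin 2) ℂ :=
  !![Complex.I * (x 2 : ℂ) + (x 3 : ℂ), -(x 0 : ℂ) - Complex.I * (x 1 : ℂ);
     (x 0 : ℂ) - Complex.I * (x 1 : ℂ), -Complex.I * (x 2 : ℂ) + (x 3 : ℂ)]


lemma wdzb_mul (f g : ℂ → ℂ) (z : ℂ) (hf : DifferentiableAt ℝ f z)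
    (hg : DifferentiableAt ℝ g z) :
    wdzb (fun w => f w * g w) z = f z * wdzb g z + g z * wdzb f z := by
  unfold wdzb
  rw [fderiv_fun_mul hf hg]
  simp only [ContinuousLinearMap.add_apply, ContinuousLinearMap.smul_apply, smul_eq_mul]
  ring

lemma diff_conj (f : ℂ → ℂ) (z : ℂ) (hf : DifferentiableAt ℝ f z) :
    DifferentiableAt ℝ (fun w => (starRingEnd ℂ) (f w)) z := hf.star

lemma wdzb_conj (f : ℂ → ℂ) (z : ℂ) (hf : DifferentiableAt ℝ f z) :
    wdzb (fun w => (starRingEnd ℂ) (f w)) z = (starRingEnd ℂ) (wdz f z) := by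
  have : (fun w => (starRingEnd ℂ) (f w)) = (Complex.conjCLE : ℂ → ℂ) ∘ f := rfl
  unfold wdzb wdz
  rw [this, fderiv_comp z Complex.conjCLE.differentiableAt hf]
  simp only [ContinuousLinearEquiv.fderiv, ContinuousLinearMap.coe_comp', Function.comp_apply,
    ContinuousLinearEquiv.coe_coe, Complex.conjCLE_apply, map_sub, _root_.map_mul, Complex.conj_I,
    _root_.map_one, map_ofNat, map_div₀]
  ring

lemma wdzb_const_mul (c : ℂ) (f : ℂ → ℂ) (z : ℂ) (hf : DifferentiableAt ℝ f z) :
    wdzb (fun w => c * f w) z = c * wdzb f z := by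
  unfold wdzb
  rw [fderiv_const_mul hf c]
  simp only [ContinuousLinearMap.smul_apply, smul_eq_mul]
  ring

lemma wdzb_add (f g : ℂ → ℂ) (z : ℂ) (hf : DifferentiableAt ℝ f z)
    (hg : DifferentiableAt ℝ g z) :
    wdzb (fun w => f w + g w) z = wdzb f z + wdzb g z := by
  unfold wdzb
  rw [fderiv_fun_add hf hg]
  simp only [ContinuousLinearMap.add_apply]
  ring

lemma wdzb_sub (f g : ℂ → ℂ) (z : ℂ) (hf : DifferentiableAt ℝ f z)
    (hg : DifferentiableAt ℝ g z) :
    wdzb (fun w => f w - g w) z = wdzb f z - wdzb g z := by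
  unfold wdzb
  rw [fderiv_fun_sub hf hg]
  simp only [ContinuousLinearMap.sub_apply]
  ring


/-- closedness of the Weierstrass forms: if `ψ` solves `Dψ = 0` and
`φ` solves `D^∨φ = 0`, then each `∂̄(x^k_z)` is real-valued, so each 1-form
`x^k_z dz + conj(x^k_z) dz̄` is closed and the Weierstrass integrals are locally defined. -/
theorem weierstrass_forms_closed
    (Ω : Set ℂ) (hΩ : IsOpen Ω) (U ψ₁ ψ₂ φ₁ φ₂ : ℂ → ℂ)
    (hψ₁ : ∀ z ∈ Ω, DifferentiableAt ℝ ψ₁ z)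
    (hψ₂ : ∀ z ∈ Ω, DifferentiableAt ℝ ψ₂ z)
    (hφ₁ : ∀ z ∈ Ω, DifferentiableAt ℝ φ₁ z)
    (hφ₂ : ∀ z ∈ Ω, DifferentiableAt ℝ φ₂ z)
    (hψ : DiracEq U ψ₁ ψ₂ Ω)
    (hφ : DiracEq (fun z => (starRingEnd ℂ) (U z)) φ₁ φ₂ Ω) :
    ∀ z ∈ Ω, ∀ k : Fin 4,
      (wdzb (fun w => weierXz (ψ₁ w) (ψ₂ w) (φ₁ w) (φ₂ w) k) z).im = 0 := by
  intro z hz k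
  have dψ₁ := hψ₁ z hz
  have dψ₂ := hψ₂ z hz
  have dφ₁ := hφ₁ z hz
  have dφ₂ := hφ₂ z hz
  have dψ₂c := diff_conj ψ₂ z dψ₂
  have dφ₂c := diff_conj φ₂ z dφ₂
  obtain ⟨hp2, hp1⟩ := hψ z hz
  obtain ⟨hf2, hf1⟩ := hφ z hz
  have eψ2 : wdz ψ₂ z = -(U z * ψ₁ z) := by linear_combination hp2
  have eψ1 : wdzb ψ₁ z = (starRingEnd ℂ) (U z) * ψ₂ z := by linear_combination -hp1
  have eφ2 : wdz φ₂ z = -((starRingEnd ℂ) (U z) * φ₁ z) := by linear_combination hf2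
  have eφ1 : wdzb φ₁ z = U z * φ₂ z := by
    have := hf1; rw [Complex.conj_conj] at this; linear_combination -this
  fin_cases k
  · show (wdzb (fun w => (Complex.I / 2) *
        ((starRingEnd ℂ) (φ₂ w) * (starRingEnd ℂ) (ψ₂ w) + φ₁ w * ψ₁ w)) z).im = 0
    rw [wdzb_const_mul _ _ _ ((dφ₂c.fun_mul dψ₂c).fun_add (dφ₁.fun_mul dψ₁)),
      wdzb_add _ _ _ (dφ₂c.fun_mul dψ₂c) (dφ₁.fun_mul dψ₁),
      wdzb_mul _ _ _ dφ₂c dψ₂c, wdzb_mul _ _ _ dφ₁ dψ₁,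
      wdzb_conj _ _ dφ₂, wdzb_conj _ _ dψ₂, eψ2, eψ1, eφ2, eφ1,
      ← Complex.conj_eq_iff_im]
    simp only [_root_.map_mul, map_add, map_sub, map_neg, Complex.conj_conj, Complex.conj_I,
      map_div₀, _root_.map_one, map_ofNat]
    ring
  · show (wdzb (fun w => (1 / 2 : ℂ) *
        ((starRingEnd ℂ) (φ₂ w) * (starRingEnd ℂ) (ψ₂ w) - φ₁ w * ψ₁ w)) z).im = 0
    rw [wdzb_const_mul _ _ _ ((dφ₂c.fun_mul dψ₂c).fun_sub (dφ₁.fun_mul dψ₁)),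
      wdzb_sub _ _ _ (dφ₂c.fun_mul dψ₂c) (dφ₁.fun_mul dψ₁),
      wdzb_mul _ _ _ dφ₂c dψ₂c, wdzb_mul _ _ _ dφ₁ dψ₁,
      wdzb_conj _ _ dφ₂, wdzb_conj _ _ dψ₂, eψ2, eψ1, eφ2, eφ1,
      ← Complex.conj_eq_iff_im]
    simp only [_root_.map_mul, map_add, map_sub, map_neg, Complex.conj_conj, Complex.conj_I,
      map_div₀, _root_.map_one, map_ofNat]
    ring
  · show (wdzb (fun w => (1 / 2 : ℂ) *
        ((starRingEnd ℂ) (φ₂ w) * ψ₁ w + φ₁ w * (starRingEnd ℂ) (ψ₂ w))) z).im = 0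
    rw [wdzb_const_mul _ _ _ ((dφ₂c.fun_mul dψ₁).fun_add (dφ₁.fun_mul dψ₂c)),
      wdzb_add _ _ _ (dφ₂c.fun_mul dψ₁) (dφ₁.fun_mul dψ₂c),
      wdzb_mul _ _ _ dφ₂c dψ₁, wdzb_mul _ _ _ dφ₁ dψ₂c,
      wdzb_conj _ _ dφ₂, wdzb_conj _ _ dψ₂, eψ2, eψ1, eφ2, eφ1,
      ← Complex.conj_eq_iff_im]
    simp only [_root_.map_mul, map_add, map_sub, map_neg, Complex.conj_conj, Complex.conj_I,
      map_div₀, _root_.map_one, map_ofNat]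
    ring
  · show (wdzb (fun w => (Complex.I / 2) *
        ((starRingEnd ℂ) (φ₂ w) * ψ₁ w - φ₁ w * (starRingEnd ℂ) (ψ₂ w))) z).im = 0
    rw [wdzb_const_mul _ _ _ ((dφ₂c.fun_mul dψ₁).fun_sub (dφ₁.fun_mul dψ₂c)),
      wdzb_sub _ _ _ (dφ₂c.fun_mul dψ₁) (dφ₁.fun_mul dψ₂c),
      wdzb_mul _ _ _ dφ₂c dψ₁, wdzb_mul _ _ _ dφ₁ dψ₂c,
      wdzb_conj _ _ dφ₂, wdzb_conj _ _ dψ₂, eψ2, eψ1, eφ2, eφ1,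
      ← Complex.conj_eq_iff_im]
    simp only [_root_.map_mul, map_add, map_sub, map_neg, Complex.conj_conj, Complex.conj_I,
      map_div₀, _root_.map_one, map_ofNat]
    ring
end
end

section
/- (Swap–transpose identity for S.) Let Φ, Ψ : Ω → M₂(ℂ) and let S be a differentiable matrix function with ∂S = −(i/2)·Γ·Φᵀ(σ₃+1)Ψ and ∂̄S = −(i/2)·Γ·Φᵀ(σ₃−1)Ψ. Then the matrix function S' := Γ Sᵀ Γ satisfies ∂S' = −(i/2)·Γ·Ψᵀ(σ₃+1)Φ and ∂̄S' = −(i/2)·Γ·Ψᵀ(σ₃−1)Φ; i.e. Γ S(Φ,Ψ)ᵀ Γ is a primitive S(Ψ,Φ). In particular, when S is invertible, −Γ⁻¹ S⁻¹ Γ = Γ S⁻¹ Γ = ((Γ Sᵀ Γ)⁻¹)ᵀ. -/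
open Complex Matrix Finset

noncomputable section

lemma wdz_neg' (f : ℂ → ℂ) (z : ℂ) : wdz (fun w => -f w) z = -wdz f z := by
  simp [wdz, fderiv_neg]; ring

lemma wdzb_neg' (f : ℂ → ℂ) (z : ℂ) : wdzb (fun w => -f w) z = -wdzb f z := by
  simp [wdzb, fderiv_neg]; ring

lemma Gam_transpose : Gamᵀ = -Gam := by
  ext i j; fin_cases i <;> fin_cases j <;> simp [Gam]

lemma Gam_mul_Gam : Gam * Gam = -1 := by
  ext i j; fin_cases i <;> fin_cases j <;>
    simp [Gam, Matrix.mul_apply, Matrix.vecMul, dotProduct, Fin.sum_univ_two, Matrix.one_apply]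

lemma Gam_inv : Gam⁻¹ = -Gam := by
  apply Matrix.inv_eq_right_inv
  rw [Matrix.mul_neg, Gam_mul_Gam]; simp

lemma swap_alg (A B C : Matrix (Fin 2) (Fin 2) ℂ) (hB : Bᵀ = B) :
    Gam * (Gam * Aᵀ * B * C)ᵀ * Gam = Gam * Cᵀ * B * A := by
  simp only [Matrix.transpose_mul, Matrix.transpose_transpose, Gam_transpose, hB]
  simp only [Matrix.mul_assoc, Matrix.mul_neg, Matrix.neg_mul, Gam_mul_Gam,
    Matrix.mul_one, neg_neg]

lemma wdzM_conj (S : ℂ → Matrix (Fin 2) (Fin 2) ℂ) (z : ℂ) :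
    wdzM (fun w => Gam * (S w)ᵀ * Gam) z = Gam * (wdzM S z)ᵀ * Gam := by
  have e00 : (fun w => (Gam * (S w)ᵀ * Gam) 0 0) = fun w => -(S w 1 1) := by
    funext w; simp [Gam, Matrix.mul_apply, Matrix.vecMul, dotProduct, Fin.sum_univ_two]
  have e01 : (fun w => (Gam * (S w)ᵀ * Gam) 0 1) = fun w => S w 0 1 := by
    funext w; simp [Gam, Matrix.mul_apply, Matrix.vecMul, dotProduct, Fin.sum_univ_two]
  have e10 : (fun w => (Gam * (S w)ᵀ * Gam) 1 0) = fun w => S w 1 0 := by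
    funext w; simp [Gam, Matrix.mul_apply, Matrix.vecMul, dotProduct, Fin.sum_univ_two]
  have e11 : (fun w => (Gam * (S w)ᵀ * Gam) 1 1) = fun w => -(S w 0 0) := by
    funext w; simp [Gam, Matrix.mul_apply, Matrix.vecMul, dotProduct, Fin.sum_univ_two]
  ext i j
  fin_cases i <;> fin_cases j <;>
    simp [wdzM, Gam, Matrix.mul_apply, Matrix.vecMul, dotProduct, Fin.sum_univ_two, e00, e01, e10, e11,
      wdz_neg']

lemma wdzbM_conj (S : ℂ → Matrix (Fin 2) (Fin 2) ℂ) (z : ℂ) :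
    wdzbM (fun w => Gam * (S w)ᵀ * Gam) z = Gam * (wdzbM S z)ᵀ * Gam := by
  have e00 : (fun w => (Gam * (S w)ᵀ * Gam) 0 0) = fun w => -(S w 1 1) := by
    funext w; simp [Gam, Matrix.mul_apply, Matrix.vecMul, dotProduct, Fin.sum_univ_two]
  have e01 : (fun w => (Gam * (S w)ᵀ * Gam) 0 1) = fun w => S w 0 1 := by
    funext w; simp [Gam, Matrix.mul_apply, Matrix.vecMul, dotProduct, Fin.sum_univ_two]
  have e10 : (fun w => (Gam * (S w)ᵀ * Gam) 1 0) = fun w => S w 1 0 := by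
    funext w; simp [Gam, Matrix.mul_apply, Matrix.vecMul, dotProduct, Fin.sum_univ_two]
  have e11 : (fun w => (Gam * (S w)ᵀ * Gam) 1 1) = fun w => -(S w 0 0) := by
    funext w; simp [Gam, Matrix.mul_apply, Matrix.vecMul, dotProduct, Fin.sum_univ_two]
  ext i j
  fin_cases i <;> fin_cases j <;>
    simp [wdzbM, Gam, Matrix.mul_apply, Matrix.vecMul, dotProduct, Fin.sum_univ_two, e00, e01, e10, e11,
      wdzb_neg']

/-- swap–transpose identity for `S`: if `S` is a primitive `S(Φ,Ψ)`, then
`S' = Γ Sᵀ Γ` is a primitive `S(Ψ,Φ)`; and when `S` is invertible,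
`−Γ⁻¹ S⁻¹ Γ = Γ S⁻¹ Γ = ((Γ Sᵀ Γ)⁻¹)ᵀ`. -/
theorem swap_transpose_primitive
    (Ω : Set ℂ) (hΩ : IsOpen Ω) (Φ Ψ S : ℂ → Matrix (Fin 2) (Fin 2) ℂ)
    (hSdiff : MatDiffOn S Ω)
    (hS : IsPrimitive Φ Ψ S Ω) :
    IsPrimitive Ψ Φ (fun z => Gam * (S z)ᵀ * Gam) Ω ∧
    (∀ z ∈ Ω, IsUnit (S z).det →
      -(Gam⁻¹ * (S z)⁻¹ * Gam) = Gam * (S z)⁻¹ * Gam ∧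
      Gam * (S z)⁻¹ * Gam = ((Gam * (S z)ᵀ * Gam)⁻¹)ᵀ) := by
  have hsig1 : (sig3 + 1)ᵀ = sig3 + 1 := by
    ext i j; fin_cases i <;> fin_cases j <;> simp [sig3, Matrix.one_apply]
  have hsig2 : (sig3 - 1)ᵀ = sig3 - 1 := by
    ext i j; fin_cases i <;> fin_cases j <;> simp [sig3, Matrix.one_apply]
  constructor
  · intro z hz
    obtain ⟨h1, h2⟩ := hS z hz
    constructor
    · rw [wdzM_conj, h1, Matrix.transpose_smul, Matrix.mul_smul, Matrix.smul_mul,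
        swap_alg _ _ _ hsig1]
    · rw [wdzbM_conj, h2, Matrix.transpose_smul, Matrix.mul_smul, Matrix.smul_mul,
        swap_alg _ _ _ hsig2]
  · intro z hz hu
    constructor
    · rw [Gam_inv]; simp [Matrix.neg_mul]
    · simp only [Matrix.mul_inv_rev, Gam_inv, Matrix.transpose_mul,
        Matrix.transpose_neg, Gam_transpose, Matrix.transpose_nonsing_inv,
        Matrix.transpose_transpose, Matrix.neg_mul, Matrix.mul_neg, neg_neg,
        Matrix.mul_assoc]
end
end

section
/- (Gauge ambiguity lemma.) Let C, D be 2×2 complex matrices of quaternionic form [[a,b],[−conj b, conj a]] satisfying Dᵀ(1+σ₃)C = 1+σ₃ and Dᵀ(σ₃−1)C = σ₃−1, where σ₃ = [[1,0],[0,−1]]. Then C and D are diagonal, C = [[c,0],[0,conj c]] for some nonzero c ∈ ℂ, and D = C⁻¹. -/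
open Complex Matrix Finset

noncomputable section

/-- A 2×2 complex matrix of quaternionic form `[[a, b], [−conj b, conj a]]`. -/
def IsQuat (M : Matrix (Fin 2) (Fin 2) ℂ) : Prop :=
  M 1 0 = -(starRingEnd ℂ) (M 0 1) ∧ M 1 1 = (starRingEnd ℂ) (M 0 0)

/-- gauge ambiguity lemma: quaternionic matrices `C`, `D` with
`Dᵀ(1+σ₃)C = 1+σ₃` and `Dᵀ(σ₃−1)C = σ₃−1` are diagonal, `C = [[c,0],[0,conj c]]`
with `c ≠ 0`, and `D = C⁻¹`. -/
theorem gauge_ambiguity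
    (C D : Matrix (Fin 2) (Fin 2) ℂ) (hC : IsQuat C) (hD : IsQuat D)
    (h1 : Dᵀ * (1 + sig3) * C = 1 + sig3)
    (h2 : Dᵀ * (sig3 - 1) * C = sig3 - 1) :
    C 0 1 = 0 ∧ C 1 0 = 0 ∧ D 0 1 = 0 ∧ D 1 0 = 0 ∧
    ∃ c : ℂ, c ≠ 0 ∧ C = !![c, 0; 0, (starRingEnd ℂ) c] ∧ D = C⁻¹ := by
  obtain ⟨hc1, hc2⟩ := hC
  obtain ⟨hd1, hd2⟩ := hD
  have e1 := fun i j => Matrix.ext_iff.mpr h1 i j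
  have e2 := fun i j => Matrix.ext_iff.mpr h2 i j
  have a00 := e1 0 0; have a01 := e1 0 1; have a10 := e1 1 0
  simp [sig3, Matrix.mul_apply, Fin.sum_univ_two, Matrix.one_apply, Matrix.add_apply,
    Matrix.sub_apply, Matrix.transpose_apply, hc1, hc2, hd1, hd2] at a00 a01 a10
  have hDC : D 0 0 * C 0 0 = 1 := by linear_combination a00 / 2
  have hD00 : D 0 0 ≠ 0 := by
    intro h; rw [h, zero_mul] at hDC; exact one_ne_zero hDC.symm
  have hC00 : C 0 0 ≠ 0 := by
    intro h; rw [h, mul_zero] at hDC; exact one_ne_zero hDC.symm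
  have hC01 : C 0 1 = 0 := a01.resolve_left hD00
  have hD01 : D 0 1 = 0 := a10.resolve_right hC00
  have hC10 : C 1 0 = 0 := by rw [hc1, hC01, map_zero, neg_zero]
  have hD10 : D 1 0 = 0 := by rw [hd1, hD01, map_zero, neg_zero]
  refine ⟨hC01, hC10, hD01, hD10, C 0 0, hC00, ?_, ?_⟩
  · ext i j
    fin_cases i <;> fin_cases j <;> simp [hC01, hC10, hc2]
  · have hCD : C * D = 1 := by
      ext i j
      fin_cases i <;> fin_cases j <;>
        simp [Matrix.mul_apply, Fin.sum_univ_two, hC01, hC10, hD01, hD10, hc2, hd2,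
          Matrix.one_apply]
      · linear_combination hDC
      · rw [← RingHom.map_mul, mul_comm, hDC, RingHom.map_one]
    exact (Matrix.inv_eq_right_inv hCD).symm
end
end

section
/- (Proposition 3, algebraic form.) Let ψ₁, ψ₂, φ₁, φ₂ ∈ ℂ, let Ψ = [[ψ₁, −conj ψ₂],[ψ₂, conj ψ₁]] and Φ = [[φ₁, −conj φ₂],[φ₂, conj φ₁]], and let x = (x¹,x²,x³,x⁴) ∈ ℝ⁴ be nonzero with associated matrix X(x) = [[i x³ + x⁴, −x¹ − i x²],[x¹ − i x², −i x³ + x⁴]]. Then the (2,2)-entry of K = Ψ · X(x)⁻¹ · Γ Φᵀ Γ⁻¹ equals (1/|x|²)·( x¹(ψ₂φ₁ − conj ψ₁ conj φ₂) + i x²(ψ₂φ₁ + conj ψ₁ conj φ₂) + i x³(conj ψ₁ φ₁ − ψ₂ conj φ₂) + x⁴(conj ψ₁ φ₁ + ψ₂ conj φ₂) ), where |x|² = (x¹)²+(x²)²+(x³)²+(x⁴)². Consequently the potential increment of the Moutard transformation is W = i K₂₂ = ⟨r, p⟩/|r|², where r is the surface point and p = e^α(n₁ + i n₂) the complex normal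 vector of the Weierstrass representation. -/
open Complex Matrix Finset

noncomputable section

/-- The conformal factor `e^{2α} = (|ψ₁|² + |ψ₂|²)(|φ₁|² + |φ₂|²)`. -/
def weierE2a (ψ₁ ψ₂ φ₁ φ₂ : ℂ) : ℝ :=
  (Complex.normSq ψ₁ + Complex.normSq ψ₂) * (Complex.normSq φ₁ + Complex.normSq φ₂)

/-- The normal vector `n₁` of the Weierstrass representation. -/
def weierN1 (ψ₁ ψ₂ φ₁ φ₂ : ℂ) : Fin 4 → ℝ := fun k =>
  (Real.sqrt (weierE2a ψ₁ ψ₂ φ₁ φ₂))⁻¹ *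
    ![-(ψ₂ * φ₁ - (starRingEnd ℂ) ψ₁ * (starRingEnd ℂ) φ₂).im,
      -((starRingEnd ℂ) ψ₁ * (starRingEnd ℂ) φ₂ + ψ₂ * φ₁).re,
      (ψ₂ * (starRingEnd ℂ) φ₂ - (starRingEnd ℂ) ψ₁ * φ₁).re,
      -((starRingEnd ℂ) ψ₁ * φ₁ + ψ₂ * (starRingEnd ℂ) φ₂).im] k

/-- The normal vector `n₂` of the Weierstrass representation. -/
def weierN2 (ψ₁ ψ₂ φ₁ φ₂ : ℂ) : Fin 4 → ℝ := fun k =>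
  (Real.sqrt (weierE2a ψ₁ ψ₂ φ₁ φ₂))⁻¹ *
    ![(ψ₂ * φ₁ - (starRingEnd ℂ) ψ₁ * (starRingEnd ℂ) φ₂).re,
      -((starRingEnd ℂ) ψ₁ * (starRingEnd ℂ) φ₂ + ψ₂ * φ₁).im,
      (ψ₂ * (starRingEnd ℂ) φ₂ - (starRingEnd ℂ) ψ₁ * φ₁).im,
      ((starRingEnd ℂ) ψ₁ * φ₁ + ψ₂ * (starRingEnd ℂ) φ₂).re] k

/-- The complex normal vector `p = e^α (n₁ + i n₂)`. -/
def weierP (ψ₁ ψ₂ φ₁ φ₂ : ℂ) : Fin 4 → ℂ := fun k =>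
  (Real.sqrt (weierE2a ψ₁ ψ₂ φ₁ φ₂) : ℂ) *
    ((weierN1 ψ₁ ψ₂ φ₁ φ₂ k : ℂ) + Complex.I * (weierN2 ψ₁ ψ₂ φ₁ φ₂ k : ℂ))

/-- The quaternionic matrix associated to a (constant) spinor. -/
def quatOf (a b : ℂ) : Matrix (Fin 2) (Fin 2) ℂ :=
  !![a, -(starRingEnd ℂ) b; b, (starRingEnd ℂ) a]

set_option maxHeartbeats 1000000 in
/-- Proposition 3, algebraic form: the `(2,2)`-entry of
`K = Ψ X(x)⁻¹ Γ Φᵀ Γ⁻¹` and the identity `W = i K₂₂ = ⟨r, p⟩/|r|²`. -/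
theorem moutard_increment_formula
    (ψ₁ ψ₂ φ₁ φ₂ : ℂ) (x : Fin 4 → ℝ) (hx : x ≠ 0)
    (hpos : 0 < weierE2a ψ₁ ψ₂ φ₁ φ₂) :
    (quatOf ψ₁ ψ₂ * (toU2 x)⁻¹ * Gam * (quatOf φ₁ φ₂)ᵀ * Gam⁻¹) 1 1 =
      (1 / ((∑ k, x k ^ 2 : ℝ) : ℂ)) *
        ((x 0 : ℂ) * (ψ₂ * φ₁ - (starRingEnd ℂ) ψ₁ * (starRingEnd ℂ) φ₂) +
          Complex.I * (x 1 : ℂ) * (ψ₂ * φ₁ + (starRingEnd ℂ) ψ₁ * (starRingEnd ℂ) φ₂) +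
          Complex.I * (x 2 : ℂ) * ((starRingEnd ℂ) ψ₁ * φ₁ - ψ₂ * (starRingEnd ℂ) φ₂) +
          (x 3 : ℂ) * ((starRingEnd ℂ) ψ₁ * φ₁ + ψ₂ * (starRingEnd ℂ) φ₂)) ∧
    Complex.I * (quatOf ψ₁ ψ₂ * (toU2 x)⁻¹ * Gam * (quatOf φ₁ φ₂)ᵀ * Gam⁻¹) 1 1 =
      (∑ k, (x k : ℂ) * weierP ψ₁ ψ₂ φ₁ φ₂ k) / ((∑ k, x k ^ 2 : ℝ) : ℂ) := by
  have hS : (0:ℝ) < ∑ k, x k ^ 2 := by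
    obtain ⟨k, hk⟩ : ∃ k, x k ≠ 0 := by
      by_contra h; push_neg at h; exact hx (funext h)
    exact Finset.sum_pos' (fun i _ => sq_nonneg _) ⟨k, Finset.mem_univ k, by positivity⟩
  have hSne : ((∑ k, x k ^ 2 : ℝ) : ℂ) ≠ 0 := by exact_mod_cast ne_of_gt hS
  have hdet : (toU2 x).det = ((∑ k, x k ^ 2 : ℝ) : ℂ) := by
    simp only [toU2, Matrix.det_fin_two_of, Fin.sum_univ_four]
    push_cast
    ring_nf
    simp only [Complex.I_sq]
    ring
  have hGam : Gam⁻¹ = !![0, -1; 1, 0] := by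
    apply Matrix.inv_eq_right_inv
    simp [Gam, Matrix.mul_fin_two, Matrix.one_fin_two]
  have hinv : (toU2 x)⁻¹ = (((∑ k, x k ^ 2 : ℝ) : ℂ))⁻¹ •
      !![-Complex.I * (x 2 : ℂ) + (x 3 : ℂ), (x 0 : ℂ) + Complex.I * (x 1 : ℂ);
         -(x 0 : ℂ) + Complex.I * (x 1 : ℂ), Complex.I * (x 2 : ℂ) + (x 3 : ℂ)] := by
    rw [Matrix.inv_def, hdet, Ring.inverse_eq_inv']
    congr 1
    rw [show toU2 x = !![Complex.I * (x 2 : ℂ) + (x 3 : ℂ), -(x 0 : ℂ) - Complex.I * (x 1 : ℂ);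
        (x 0 : ℂ) - Complex.I * (x 1 : ℂ), -Complex.I * (x 2 : ℂ) + (x 3 : ℂ)] from rfl,
      Matrix.adjugate_fin_two_of]
    congr 1 <;> ring
  have h1 : (quatOf ψ₁ ψ₂ * (toU2 x)⁻¹ * Gam * (quatOf φ₁ φ₂)ᵀ * Gam⁻¹) 1 1 =
      (1 / ((∑ k, x k ^ 2 : ℝ) : ℂ)) *
        ((x 0 : ℂ) * (ψ₂ * φ₁ - (starRingEnd ℂ) ψ₁ * (starRingEnd ℂ) φ₂) +
          Complex.I * (x 1 : ℂ) * (ψ₂ * φ₁ + (starRingEnd ℂ) ψ₁ * (starRingEnd ℂ) φ₂) +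
          Complex.I * (x 2 : ℂ) * ((starRingEnd ℂ) ψ₁ * φ₁ - ψ₂ * (starRingEnd ℂ) φ₂) +
          (x 3 : ℂ) * ((starRingEnd ℂ) ψ₁ * φ₁ + ψ₂ * (starRingEnd ℂ) φ₂)) := by
    rw [hinv, hGam]
    simp only [quatOf, Gam, Matrix.mul_apply, Fin.sum_univ_two, Matrix.smul_apply,
      Matrix.transpose_apply, Matrix.cons_val', Matrix.cons_val_zero, Matrix.cons_val_one,
      Matrix.head_cons, Matrix.head_fin_const, Matrix.empty_val', Matrix.cons_val_fin_one,
      smul_eq_mul, Matrix.of_apply]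
    field_simp
    ring
  refine ⟨h1, ?_⟩
  rw [h1]
  have hsqrt : (0:ℝ) < Real.sqrt (weierE2a ψ₁ ψ₂ φ₁ φ₂) := Real.sqrt_pos.mpr hpos
  have hsne : ((Real.sqrt (weierE2a ψ₁ ψ₂ φ₁ φ₂) : ℝ) : ℂ) ≠ 0 := by
    exact_mod_cast ne_of_gt hsqrt
  have hp : ∀ k, weierP ψ₁ ψ₂ φ₁ φ₂ k =
      (![Complex.I * (ψ₂ * φ₁ - (starRingEnd ℂ) ψ₁ * (starRingEnd ℂ) φ₂),
        -((starRingEnd ℂ) ψ₁ * (starRingEnd ℂ) φ₂ + ψ₂ * φ₁),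
        ψ₂ * (starRingEnd ℂ) φ₂ - (starRingEnd ℂ) ψ₁ * φ₁,
        Complex.I * ((starRingEnd ℂ) ψ₁ * φ₁ + ψ₂ * (starRingEnd ℂ) φ₂)] k) := by
    intro k
    fin_cases k <;>
    · simp only [weierP, weierN1, weierN2, Matrix.cons_val_zero, Matrix.cons_val_one,
        Matrix.head_cons, Matrix.cons_val_two, Matrix.tail_cons, Matrix.cons_val_three]
      rw [Complex.ext_iff]
      constructor <;>
        simp [Complex.mul_re, Complex.mul_im] <;>
        field_simp [ne_of_gt hsqrt] <;>
        ring
  simp only [Fin.sum_univ_four, hp 0, hp 1, hp 2, hp 3]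
  simp only [Matrix.cons_val_zero, Matrix.cons_val_one, Matrix.head_cons,
    Matrix.cons_val_two, Matrix.tail_cons, Matrix.cons_val_three]
  field_simp
  ring_nf
  simp only [Complex.I_sq]
  ring
end
end

section
/- (Weierstrass data of the Clifford torus.) The spinors ψ₀ = (e^{−i(x+y)/2}/√2)·(e^{3πi/8}, e^{−3πi/8}) and φ₀ = (e^{i(y−x)/2}/2)·(−e^{−3πi/8}, e^{3πi/8}), regarded as functions of z = x + iy, satisfy the Dirac equations Dψ₀ = 0 and D^∨φ₀ = 0 with the constant potential U = −i/√8. Moreover, the Weierstrass derivatives x¹_z = (i/2)(conj φ₀₂ conj ψ₀₂ + φ₀₁ψ₀₁), x²_z = (1/2)(conj φ₀₂ conj ψ₀₂ − φ₀₁ψ₀₁), x³_z = (1/2)(conj φ₀₂ ψ₀₁ + φ₀₁ conj ψ₀₂), x⁴_z = (i/2)(conj φ₀₂ ψ₀₁ − φ₀₁ conj ψ₀₂) are the z-derivatives of the parameterization x¹ = cos(x)/√2, x² = sin(x)/√2, x³ = −cos(y)/√2, x⁴ = −sin(y)/√2 of the Clifford torus { (x¹)²+(x²)² = 1/2, (x³)²+(x⁴)²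 = 1/2 } ⊂ ℝ⁴. -/
open Complex Matrix Finset

noncomputable section

/-- First spinor component `ψ₀₁ = (e^{−i(x+y)/2}/√2)·e^{3πi/8}` of the Clifford torus. -/
def cliffPsi1 (z : ℂ) : ℂ :=
  Complex.exp (-(Complex.I * ((z.re : ℂ) + (z.im : ℂ))) / 2) / (Real.sqrt 2 : ℂ) *
    Complex.exp (Complex.I * (3 * Real.pi / 8))

/-- Second spinor component `ψ₀₂ = (e^{−i(x+y)/2}/√2)·e^{−3πi/8}` of the Clifford torus. -/
def cliffPsi2 (z : ℂ) : ℂ :=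
  Complex.exp (-(Complex.I * ((z.re : ℂ) + (z.im : ℂ))) / 2) / (Real.sqrt 2 : ℂ) *
    Complex.exp (-(Complex.I * (3 * Real.pi / 8)))

/-- First spinor component `φ₀₁ = (e^{i(y−x)/2}/2)·(−e^{−3πi/8})` of the Clifford torus. -/
def cliffPhi1 (z : ℂ) : ℂ :=
  Complex.exp (Complex.I * ((z.im : ℂ) - (z.re : ℂ)) / 2) / 2 *
    (-Complex.exp (-(Complex.I * (3 * Real.pi / 8))))

/-- Second spinor component `φ₀₂ = (e^{i(y−x)/2}/2)·e^{3πi/8}` of the Clifford torus. -/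
def cliffPhi2 (z : ℂ) : ℂ :=
  Complex.exp (Complex.I * ((z.im : ℂ) - (z.re : ℂ)) / 2) / 2 *
    Complex.exp (Complex.I * (3 * Real.pi / 8))

/-- The parameterization `(cos x/√2, sin x/√2, −cos y/√2, −sin y/√2)` of the Clifford torus. -/
def cliffordTorus (z : ℂ) : Fin 4 → ℝ :=
  ![Real.cos z.re / Real.sqrt 2, Real.sin z.re / Real.sqrt 2,
    -Real.cos z.im / Real.sqrt 2, -Real.sin z.im / Real.sqrt 2]

/- ========= auxiliary lemmas ========= -/

def rlin (a b : ℂ) : ℂ →L[ℝ] ℂ :=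
  a • (Complex.ofRealCLM.comp Complex.reCLM) + b • (Complex.ofRealCLM.comp Complex.imCLM)

@[simp] lemma rlin_apply (a b v : ℂ) : rlin a b v = a * v.re + b * v.im := by
  simp [rlin, mul_comm]

lemma hasF_exp (a b : ℂ) (z : ℂ) :
    HasFDerivAt (fun w : ℂ => Complex.exp (a * w.re + b * w.im))
      (Complex.exp (a * z.re + b * z.im) • rlin a b) z := by
  have h1 : HasFDerivAt (fun w : ℂ => a * w.re + b * w.im) (rlin a b) z := by
    have := ((Complex.ofRealCLM.comp Complex.reCLM).hasFDerivAt (x := z)).const_smul a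
    have h2 := ((Complex.ofRealCLM.comp Complex.imCLM).hasFDerivAt (x := z)).const_smul b
    exact (rlin a b).hasFDerivAt.congr_of_eventuallyEq (Filter.Eventually.of_forall fun w => (rlin_apply a b w).symm)
  exact (Complex.hasDerivAt_exp (a * z.re + b * z.im)).comp_hasFDerivAt z h1

lemma wdz_const_mul (c : ℂ) (a b : ℂ) (z : ℂ) :
    wdz (fun w : ℂ => c * Complex.exp (a * w.re + b * w.im)) z =
      c * ((a - Complex.I * b) / 2 * Complex.exp (a * z.re + b * z.im)) := by
  have h := (hasF_exp a b z).const_mul c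
  rw [wdz, h.fderiv]
  simp
  ring

lemma wdzb_const_mul_s19 (c : ℂ) (a b : ℂ) (z : ℂ) :
    wdzb (fun w : ℂ => c * Complex.exp (a * w.re + b * w.im)) z =
      c * ((a + Complex.I * b) / 2 * Complex.exp (a * z.re + b * z.im)) := by
  have h := (hasF_exp a b z).const_mul c
  rw [wdzb, h.fderiv]
  simp
  ring

lemma wdz_ofReal_re {f : ℝ → ℝ} {f' : ℝ} (z : ℂ) (hf : HasDerivAt f f' z.re) :
    wdz (fun w : ℂ => ((f w.re : ℝ) : ℂ)) z = (f' : ℂ) / 2 := by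
  have h : HasFDerivAt (fun w : ℂ => ((f w.re : ℝ) : ℂ))
      ((f' : ℂ) • (Complex.ofRealCLM.comp Complex.reCLM)) z := by
    have h1 : HasFDerivAt (fun w : ℂ => f w.re) (f' • (Complex.reCLM : ℂ →L[ℝ] ℝ)) z :=
      hf.comp_hasFDerivAt z Complex.reCLM.hasFDerivAt
    have := Complex.ofRealCLM.hasFDerivAt.comp z h1
    refine this.congr_fderiv ?_
    ext v
    simp [mul_comm]
  rw [wdz, h.fderiv]
  simp
  ring

lemma wdz_ofReal_im {f : ℝ → ℝ} {f' : ℝ} (z : ℂ) (hf : HasDerivAt f f' z.im) :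
    wdz (fun w : ℂ => ((f w.im : ℝ) : ℂ)) z = -Complex.I * (f' : ℂ) / 2 := by
  have h : HasFDerivAt (fun w : ℂ => ((f w.im : ℝ) : ℂ))
      ((f' : ℂ) • (Complex.ofRealCLM.comp Complex.imCLM)) z := by
    have h1 : HasFDerivAt (fun w : ℂ => f w.im) (f' • (Complex.imCLM : ℂ →L[ℝ] ℝ)) z :=
      hf.comp_hasFDerivAt z Complex.imCLM.hasFDerivAt
    have := Complex.ofRealCLM.hasFDerivAt.comp z h1
    refine this.congr_fderiv ?_
    ext v
    simp [mul_comm]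
  rw [wdz, h.fderiv]
  simp
  ring

lemma hs2 : (Real.sqrt 2 : ℂ) * (Real.sqrt 2 : ℂ) = 2 := by
  norm_cast
  exact Real.mul_self_sqrt (by norm_num)

lemma hs0 : (Real.sqrt 2 : ℂ) ≠ 0 := by
  simp [Real.sqrt_eq_zero']

lemma hinv : ((Real.sqrt 2 : ℂ))⁻¹ * ((Real.sqrt 2 : ℂ))⁻¹ = (2 : ℂ)⁻¹ := by
  rw [← mul_inv, hs2]

lemma h8 : (Real.sqrt 8 : ℂ) = 2 * (Real.sqrt 2 : ℂ) := by
  norm_cast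
  rw [show (8:ℝ) = 2^2*2 by norm_num, Real.sqrt_mul (by positivity),
    Real.sqrt_sq (by norm_num : (0:ℝ) ≤ 2)]

lemma hAB : Complex.exp (Complex.I * (3 * Real.pi / 8)) *
    Complex.exp (-(Complex.I * (3 * Real.pi / 8))) = 1 := by
  rw [← Complex.exp_add, show Complex.I * (3 * (Real.pi:ℂ) / 8) +
    -(Complex.I * (3 * Real.pi / 8)) = 0 by ring, Complex.exp_zero]

lemma hBB : Complex.exp (-(Complex.I * (3 * Real.pi / 8))) *
    Complex.exp (-(Complex.I * (3 * Real.pi / 8))) = (-1 - Complex.I) / (Real.sqrt 2 : ℂ) := by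
  rw [← Complex.exp_add,
    show -(Complex.I * (3 * (Real.pi:ℂ) / 8)) + -(Complex.I * (3 * Real.pi / 8)) =
      ((-(3*Real.pi/4) : ℝ) : ℂ) * Complex.I by push_cast; ring,
    Complex.exp_mul_I, ← Complex.ofReal_cos, ← Complex.ofReal_sin,
    show -(3*Real.pi/4) = -(Real.pi - Real.pi/4) by ring,
    Real.cos_neg, Real.sin_neg, Real.cos_pi_sub, Real.sin_pi_sub,
    Real.cos_pi_div_four, Real.sin_pi_div_four]
  have := hs2
  push_cast
  field_simp
  linear_combination (-1 - Complex.I) * this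

lemma hB : Complex.exp (-(Complex.I * (3 * Real.pi / 8))) =
    ((-1 - Complex.I) / (Real.sqrt 2 : ℂ)) * Complex.exp (Complex.I * (3 * Real.pi / 8)) := by
  have h : (Complex.exp (-(Complex.I * (3 * Real.pi / 8))) *
      Complex.exp (-(Complex.I * (3 * Real.pi / 8)))) *
      Complex.exp (Complex.I * (3 * Real.pi / 8)) =
      Complex.exp (-(Complex.I * (3 * Real.pi / 8))) := by
    calc _ = Complex.exp (-(Complex.I * (3 * Real.pi / 8))) *
        (Complex.exp (Complex.I * (3 * Real.pi / 8)) *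
          Complex.exp (-(Complex.I * (3 * Real.pi / 8)))) := by ring
      _ = _ := by rw [hAB, mul_one]
  rw [← h, hBB]

lemma psi1_eq : cliffPsi1 = fun w : ℂ =>
    (Complex.exp (Complex.I * (3 * Real.pi / 8)) / (Real.sqrt 2 : ℂ)) *
      Complex.exp ((-Complex.I/2) * w.re + (-Complex.I/2) * w.im) := by
  funext w
  unfold cliffPsi1
  rw [show (-Complex.I/2) * (w.re:ℂ) + (-Complex.I/2) * (w.im:ℂ) =
    -(Complex.I * ((w.re:ℂ) + w.im)) / 2 by ring]
  ring

lemma psi2_eq : cliffPsi2 = fun w : ℂ =>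
    (Complex.exp (-(Complex.I * (3 * Real.pi / 8))) / (Real.sqrt 2 : ℂ)) *
      Complex.exp ((-Complex.I/2) * w.re + (-Complex.I/2) * w.im) := by
  funext w
  unfold cliffPsi2
  rw [show (-Complex.I/2) * (w.re:ℂ) + (-Complex.I/2) * (w.im:ℂ) =
    -(Complex.I * ((w.re:ℂ) + w.im)) / 2 by ring]
  ring

lemma phi1_eq : cliffPhi1 = fun w : ℂ =>
    (-Complex.exp (-(Complex.I * (3 * Real.pi / 8))) / 2) *
      Complex.exp ((-Complex.I/2) * w.re + (Complex.I/2) * w.im) := by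
  funext w
  unfold cliffPhi1
  rw [show (-Complex.I/2) * (w.re:ℂ) + (Complex.I/2) * (w.im:ℂ) =
    Complex.I * ((w.im:ℂ) - w.re) / 2 by ring]
  ring

lemma phi2_eq : cliffPhi2 = fun w : ℂ =>
    (Complex.exp (Complex.I * (3 * Real.pi / 8)) / 2) *
      Complex.exp ((-Complex.I/2) * w.re + (Complex.I/2) * w.im) := by
  funext w
  unfold cliffPhi2
  rw [show (-Complex.I/2) * (w.re:ℂ) + (Complex.I/2) * (w.im:ℂ) =
    Complex.I * ((w.im:ℂ) - w.re) / 2 by ring]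
  ring

lemma conj_psi2 (z : ℂ) : (starRingEnd ℂ) (cliffPsi2 z) =
    (Complex.exp (Complex.I * (3 * Real.pi / 8)) / (Real.sqrt 2 : ℂ)) *
      Complex.exp ((Complex.I/2) * z.re + (Complex.I/2) * z.im) := by
  have a1 : (starRingEnd ℂ) (-(Complex.I * (3 * (Real.pi:ℂ) / 8))) =
      Complex.I * (3 * Real.pi / 8) := by
    simp only [map_neg, _root_.map_mul, map_div₀, map_ofNat, Complex.conj_I, Complex.conj_ofReal]
    ring
  have a2 : (starRingEnd ℂ) ((-Complex.I/2) * (z.re:ℂ) + (-Complex.I/2) * (z.im:ℂ)) =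
      (Complex.I/2) * z.re + (Complex.I/2) * z.im := by
    simp only [map_add, _root_.map_mul, map_div₀, map_neg, map_ofNat, Complex.conj_I,
      Complex.conj_ofReal]
    ring
  rw [congrFun psi2_eq z, _root_.map_mul, map_div₀, ← Complex.exp_conj, ← Complex.exp_conj,
    a1, a2, Complex.conj_ofReal]

lemma conj_phi2 (z : ℂ) : (starRingEnd ℂ) (cliffPhi2 z) =
    (Complex.exp (-(Complex.I * (3 * Real.pi / 8))) / 2) *
      Complex.exp ((Complex.I/2) * z.re + (-Complex.I/2) * z.im) := by
  have a1 : (starRingEnd ℂ) (Complex.I * (3 * (Real.pi:ℂ) / 8)) =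
      -(Complex.I * (3 * Real.pi / 8)) := by
    simp only [_root_.map_mul, map_div₀, map_ofNat, Complex.conj_I, Complex.conj_ofReal]
    ring
  have a2 : (starRingEnd ℂ) ((-Complex.I/2) * (z.re:ℂ) + (Complex.I/2) * (z.im:ℂ)) =
      (Complex.I/2) * z.re + (-Complex.I/2) * z.im := by
    simp only [map_add, _root_.map_mul, map_div₀, map_neg, map_ofNat, Complex.conj_I,
      Complex.conj_ofReal]
    ring
  rw [congrFun phi2_eq z, _root_.map_mul, map_div₀, ← Complex.exp_conj, ← Complex.exp_conj,
    a1, a2, map_ofNat]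

lemma prod1 (z : ℂ) : cliffPhi1 z * cliffPsi1 z =
    -Complex.exp (((-z.re : ℝ) : ℂ) * Complex.I) / (2 * (Real.sqrt 2 : ℂ)) := by
  rw [congrFun phi1_eq z, congrFun psi1_eq z]
  have h1 : Complex.exp ((-Complex.I/2) * z.re + (Complex.I/2) * z.im) *
      Complex.exp ((-Complex.I/2) * z.re + (-Complex.I/2) * z.im) =
      Complex.exp (((-z.re : ℝ) : ℂ) * Complex.I) := by
    rw [← Complex.exp_add]
    congr 1
    push_cast
    ring
  have h2 := hAB
  linear_combination (-(Complex.exp (Complex.I * (3 * Real.pi / 8)) *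
      Complex.exp (-(Complex.I * (3 * Real.pi / 8)))) / (2 * (Real.sqrt 2 : ℂ))) * h1 +
    (-Complex.exp (((-z.re : ℝ) : ℂ) * Complex.I) / (2 * (Real.sqrt 2 : ℂ))) * h2

lemma prod2 (z : ℂ) : (starRingEnd ℂ) (cliffPhi2 z) * (starRingEnd ℂ) (cliffPsi2 z) =
    Complex.exp (((z.re : ℝ) : ℂ) * Complex.I) / (2 * (Real.sqrt 2 : ℂ)) := by
  rw [conj_phi2, conj_psi2]
  have h1 : Complex.exp ((Complex.I/2) * z.re + (-Complex.I/2) * z.im) *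
      Complex.exp ((Complex.I/2) * z.re + (Complex.I/2) * z.im) =
      Complex.exp (((z.re : ℝ) : ℂ) * Complex.I) := by
    rw [← Complex.exp_add]
    congr 1
    push_cast
    ring
  have h2 := hAB
  linear_combination (Complex.exp (Complex.I * (3 * Real.pi / 8)) *
      Complex.exp (-(Complex.I * (3 * Real.pi / 8))) / (2 * (Real.sqrt 2 : ℂ))) * h1 +
    (Complex.exp (((z.re : ℝ) : ℂ) * Complex.I) / (2 * (Real.sqrt 2 : ℂ))) * h2

lemma prod3 (z : ℂ) : (starRingEnd ℂ) (cliffPhi2 z) * cliffPsi1 z =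
    Complex.exp (((-z.im : ℝ) : ℂ) * Complex.I) / (2 * (Real.sqrt 2 : ℂ)) := by
  rw [conj_phi2, congrFun psi1_eq z]
  have h1 : Complex.exp ((Complex.I/2) * z.re + (-Complex.I/2) * z.im) *
      Complex.exp ((-Complex.I/2) * z.re + (-Complex.I/2) * z.im) =
      Complex.exp (((-z.im : ℝ) : ℂ) * Complex.I) := by
    rw [← Complex.exp_add]
    congr 1
    push_cast
    ring
  have h2 := hAB
  linear_combination (Complex.exp (Complex.I * (3 * Real.pi / 8)) *
      Complex.exp (-(Complex.I * (3 * Real.pi / 8))) / (2 * (Real.sqrt 2 : ℂ))) * h1 +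
    (Complex.exp (((-z.im : ℝ) : ℂ) * Complex.I) / (2 * (Real.sqrt 2 : ℂ))) * h2

lemma prod4 (z : ℂ) : cliffPhi1 z * (starRingEnd ℂ) (cliffPsi2 z) =
    -Complex.exp (((z.im : ℝ) : ℂ) * Complex.I) / (2 * (Real.sqrt 2 : ℂ)) := by
  rw [congrFun phi1_eq z, conj_psi2]
  have h1 : Complex.exp ((-Complex.I/2) * z.re + (Complex.I/2) * z.im) *
      Complex.exp ((Complex.I/2) * z.re + (Complex.I/2) * z.im) =
      Complex.exp (((z.im : ℝ) : ℂ) * Complex.I) := by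
    rw [← Complex.exp_add]
    congr 1
    push_cast
    ring
  have h2 := hAB
  linear_combination (-(Complex.exp (Complex.I * (3 * Real.pi / 8)) *
      Complex.exp (-(Complex.I * (3 * Real.pi / 8)))) / (2 * (Real.sqrt 2 : ℂ))) * h1 +
    (-Complex.exp (((z.im : ℝ) : ℂ) * Complex.I) / (2 * (Real.sqrt 2 : ℂ))) * h2


/-- Weierstrass data of the Clifford torus: the spinors `ψ₀`, `φ₀` solve the
Dirac equations with the constant potential `U = −i/√8`, and their Weierstrass derivatives are
the `z`-derivatives of the parameterization of the Clifford torus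
`{(x¹)²+(x²)² = 1/2, (x³)²+(x⁴)² = 1/2} ⊂ ℝ⁴`. -/
theorem clifford_torus_weierstrass_data :
    DiracEq (fun _ => -Complex.I / (Real.sqrt 8 : ℂ)) cliffPsi1 cliffPsi2 Set.univ ∧
    DiracEq (fun _ => (starRingEnd ℂ) (-Complex.I / (Real.sqrt 8 : ℂ)))
      cliffPhi1 cliffPhi2 Set.univ ∧
    (∀ z : ℂ, ∀ k : Fin 4,
      wdz (fun w => ((cliffordTorus w k : ℝ) : ℂ)) z =
        weierXz (cliffPsi1 z) (cliffPsi2 z) (cliffPhi1 z) (cliffPhi2 z) k) ∧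
    (∀ z : ℂ,
      cliffordTorus z 0 ^ 2 + cliffordTorus z 1 ^ 2 = 1 / 2 ∧
      cliffordTorus z 2 ^ 2 + cliffordTorus z 3 ^ 2 = 1 / 2) := by
  have hIs := Complex.I_sq
  refine ⟨?_, ?_, ?_, ?_⟩
  · -- Dirac equation for psi
    intro z _
    have p1 : cliffPsi1 z = (Complex.exp (Complex.I * (3 * Real.pi / 8)) / (Real.sqrt 2 : ℂ)) *
        Complex.exp ((-Complex.I/2) * z.re + (-Complex.I/2) * z.im) := congrFun psi1_eq z
    have p2 : cliffPsi2 z = (Complex.exp (-(Complex.I * (3 * Real.pi / 8))) / (Real.sqrt 2 : ℂ)) *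
        Complex.exp ((-Complex.I/2) * z.re + (-Complex.I/2) * z.im) := congrFun psi2_eq z
    constructor
    · rw [psi2_eq, wdz_const_mul, p1, hB, h8]
      linear_combination (-(Complex.exp (Complex.I * (3 * Real.pi / 8)) *
        Complex.exp ((-Complex.I/2) * z.re + (-Complex.I/2) * z.im) * Complex.I) /
        (4 * (Real.sqrt 2 : ℂ) * (Real.sqrt 2 : ℂ))) * hIs
    · rw [psi1_eq, wdzb_const_mul_s19, p2]
      simp only [map_div₀, map_neg, Complex.conj_I, Complex.conj_ofReal]
      rw [hB, h8]
      linear_combination (-(Complex.exp (Complex.I * (3 * Real.pi / 8)) *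
        Complex.exp ((-Complex.I/2) * z.re + (-Complex.I/2) * z.im) *
        (Complex.I + Complex.I^2) * ((Real.sqrt 2 : ℂ))⁻¹) / 2) * hinv
  · -- Dirac equation for phi
    intro z _
    have q1 : cliffPhi1 z = (-Complex.exp (-(Complex.I * (3 * Real.pi / 8))) / 2) *
        Complex.exp ((-Complex.I/2) * z.re + (Complex.I/2) * z.im) := congrFun phi1_eq z
    have q2 : cliffPhi2 z = (Complex.exp (Complex.I * (3 * Real.pi / 8)) / 2) *
        Complex.exp ((-Complex.I/2) * z.re + (Complex.I/2) * z.im) := congrFun phi2_eq z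
    constructor
    · rw [phi2_eq, wdz_const_mul, q1]
      simp only [map_div₀, map_neg, Complex.conj_I, Complex.conj_ofReal]
      rw [hB, h8]
      linear_combination ((Complex.exp (Complex.I * (3 * Real.pi / 8)) *
        Complex.exp ((-Complex.I/2) * z.re + (Complex.I/2) * z.im) *
        (Complex.I + Complex.I^2)) / 4) * hinv
    · rw [phi1_eq, wdzb_const_mul_s19, q2]
      simp only [map_div₀, map_neg, Complex.conj_I, Complex.conj_ofReal]
      rw [hB, h8]
      linear_combination (-(Complex.exp (Complex.I * (3 * Real.pi / 8)) *
        Complex.exp ((-Complex.I/2) * z.re + (Complex.I/2) * z.im) * Complex.I) /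
        (8 * (Real.sqrt 2 : ℂ))) * hIs
  · -- Weierstrass derivatives
    intro z k
    fin_cases k
    · show wdz (fun w => ((cliffordTorus w 0 : ℝ) : ℂ)) z =
        (Complex.I / 2) * ((starRingEnd ℂ) (cliffPhi2 z) * (starRingEnd ℂ) (cliffPsi2 z) +
          cliffPhi1 z * cliffPsi1 z)
      have e0 : (fun w : ℂ => ((cliffordTorus w 0 : ℝ) : ℂ)) =
          fun w : ℂ => (((Real.cos w.re / Real.sqrt 2 : ℝ)) : ℂ) := by
        funext w; simp [cliffordTorus]
      rw [e0, wdz_ofReal_re z ((Real.hasDerivAt_cos z.re).div_const _)]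
      rw [prod1, prod2, Complex.exp_mul_I, Complex.exp_mul_I]
      simp only [← Complex.ofReal_cos, ← Complex.ofReal_sin, Real.cos_neg, Real.sin_neg]
      push_cast
      linear_combination (-(Complex.sin (z.re : ℂ)) * ((Real.sqrt 2 : ℂ))⁻¹ / 2) * hIs
    · show wdz (fun w => ((cliffordTorus w 1 : ℝ) : ℂ)) z =
        (1 / 2) * ((starRingEnd ℂ) (cliffPhi2 z) * (starRingEnd ℂ) (cliffPsi2 z) -
          cliffPhi1 z * cliffPsi1 z)
      have e0 : (fun w : ℂ => ((cliffordTorus w 1 : ℝ) : ℂ)) =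
          fun w : ℂ => (((Real.sin w.re / Real.sqrt 2 : ℝ)) : ℂ) := by
        funext w; simp [cliffordTorus]
      rw [e0, wdz_ofReal_re z ((Real.hasDerivAt_sin z.re).div_const _)]
      rw [prod1, prod2, Complex.exp_mul_I, Complex.exp_mul_I, ← Complex.ofReal_cos,
        ← Complex.ofReal_sin, ← Complex.ofReal_cos, ← Complex.ofReal_sin,
        Real.cos_neg, Real.sin_neg]
      push_cast
      ring
    · show wdz (fun w => ((cliffordTorus w 2 : ℝ) : ℂ)) z =
        (1 / 2) * ((starRingEnd ℂ) (cliffPhi2 z) * cliffPsi1 z +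
          cliffPhi1 z * (starRingEnd ℂ) (cliffPsi2 z))
      have e0 : (fun w : ℂ => ((cliffordTorus w 2 : ℝ) : ℂ)) =
          fun w : ℂ => (((-Real.cos w.im / Real.sqrt 2 : ℝ)) : ℂ) := by
        funext w; simp [cliffordTorus]
      rw [e0, wdz_ofReal_im (f := fun t => -Real.cos t / Real.sqrt 2) z (((Real.hasDerivAt_cos z.im).neg).div_const _)]
      rw [prod3, prod4, Complex.exp_mul_I, Complex.exp_mul_I, ← Complex.ofReal_cos,
        ← Complex.ofReal_sin, ← Complex.ofReal_cos, ← Complex.ofReal_sin,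
        Real.cos_neg, Real.sin_neg]
      push_cast
      ring
    · show wdz (fun w => ((cliffordTorus w 3 : ℝ) : ℂ)) z =
        (Complex.I / 2) * ((starRingEnd ℂ) (cliffPhi2 z) * cliffPsi1 z -
          cliffPhi1 z * (starRingEnd ℂ) (cliffPsi2 z))
      have e0 : (fun w : ℂ => ((cliffordTorus w 3 : ℝ) : ℂ)) =
          fun w : ℂ => (((-Real.sin w.im / Real.sqrt 2 : ℝ)) : ℂ) := by
        funext w; simp [cliffordTorus]
      rw [e0, wdz_ofReal_im (f := fun t => -Real.sin t / Real.sqrt 2) z (((Real.hasDerivAt_sin z.im).neg).div_const _)]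
      rw [prod3, prod4, Complex.exp_mul_I, Complex.exp_mul_I]
      simp only [← Complex.ofReal_cos, ← Complex.ofReal_sin, Real.cos_neg, Real.sin_neg]
      push_cast
      ring
  · -- the torus equations
    intro z
    have hs : Real.sqrt 2 ^ 2 = 2 := Real.sq_sqrt (by norm_num)
    have hne : Real.sqrt 2 ≠ 0 := by positivity
    constructor
    · simp only [cliffordTorus, Matrix.cons_val_zero, Matrix.cons_val_one, Matrix.head_cons]
      field_simp
      rw [Real.cos_sq_add_sin_sq, hs, one_mul]
    · simp only [cliffordTorus, Matrix.cons_val_zero, Matrix.cons_val_one, Matrix.head_cons,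
        Matrix.cons_val_two, Matrix.cons_val_three, Matrix.tail_cons]
      field_simp
      rw [Real.cos_sq_add_sin_sq, hs, one_mul]
end
end
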